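/- At v = 0 one has θ'(0, τ) = 2π q^{1/8} ∏_{j=1}^∞ (1-q^j)^3, i.e. the v-derivative of θ at 0 equals 2π q^{1/8} η-type product. -/

import Mathlib

open Complex

/-- `q = e^{2πiτ}`. -/
noncomputable def qnome (τ : ℂ) : ℂ := Complex.exp (2 * (Real.pi : ℂ) * Complex.I * τ)

/-- `θ(v,τ) = 2 q^{1/8} sin(πv) ∏_{j≥1} (1-q^j)(1-e^{2πiv}q^j)(1-e^{-2πiv}q^j)`. -/
noncomputable def jacobiTheta0 (v τ : ℂ) : ℂ :=
  2 * Complex.exp ((Real.pi : ℂ) * Complex.I * τ / 4) * Complex.sin ((Real.pi : ℂ) * v) *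
    ∏' j : ℕ, ((1 - qnome τ ^ (j + 1)) *
      (1 - Complex.exp (2 * (Real.pi : ℂ) * Complex.I * v) * qnome τ ^ (j + 1)) *
      (1 - Complex.exp (-(2 * (Real.pi : ℂ) * Complex.I * v)) * qnome τ ^ (j + 1)))

open Filter Topology Metric

section aux


variable {τ : ℂ}

/-- the log-sum term -/
noncomputable def thetaLog (τ : ℂ) (j : ℕ) (v : ℂ) : ℂ :=
  Complex.log (1 - qnome τ ^ (j + 1)) +
  Complex.log (1 - Complex.exp (2 * (Real.pi : ℂ) * Complex.I * v) * qnome τ ^ (j + 1)) +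
  Complex.log (1 - Complex.exp (-(2 * (Real.pi : ℂ) * Complex.I * v)) * qnome τ ^ (j + 1))

lemma qnome_norm_lt_one (hτ : 0 < τ.im) : ‖qnome τ‖ < 1 := by
  rw [qnome, Complex.norm_exp, Real.exp_lt_one_iff]
  simp [Complex.mul_re, Complex.mul_im]
  nlinarith [Real.pi_pos]

lemma qnome_norm_pos : 0 < ‖qnome τ‖ :=
  norm_pos_iff.2 (Complex.exp_ne_zero _)

-- key norm bound
lemma coef_pow_bound (hτ : 0 < τ.im) {w : ℂ}
    (hw : ‖w‖ ≤ (1 + ‖qnome τ‖) / (2 * ‖qnome τ‖)) (j : ℕ) :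
    ‖w * qnome τ ^ (j + 1)‖ ≤ ((1 + ‖qnome τ‖) / 2) ^ (j + 1) := by
  set r := ‖qnome τ‖ with hr
  have hr0 : 0 < r := qnome_norm_pos
  have hr1 : r < 1 := qnome_norm_lt_one hτ
  have hrs : r ≤ (1 + r) / 2 := by linarith
  calc ‖w * qnome τ ^ (j + 1)‖ = ‖w‖ * (r ^ j * r) := by
        rw [norm_mul, norm_pow, pow_succ]
    _ ≤ ((1 + r) / (2 * r)) * (r ^ j * r) := by
        have : (0:ℝ) ≤ r ^ j * r := by positivity
        exact mul_le_mul_of_nonneg_right hw this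
    _ = ((1 + r) / 2) * r ^ j := by field_simp
    _ ≤ ((1 + r) / 2) * ((1 + r) / 2) ^ j := by
        have := pow_le_pow_left₀ hr0.le hrs j
        have h2 : (0:ℝ) ≤ (1 + r) / 2 := by linarith
        exact mul_le_mul_of_nonneg_left this h2
    _ = ((1 + r) / 2) ^ (j + 1) := by rw [pow_succ]; ring

lemma log_one_sub_bound {z : ℂ} {t : ℝ} (ht : t < 1) (ht0 : 0 ≤ t) (hz : ‖z‖ ≤ t) :
    ‖Complex.log (1 - z)‖ ≤ ((1 - t)⁻¹ / 2 + 1) * t := by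
  have hz1 : ‖(-z)‖ < 1 := by rw [norm_neg]; exact hz.trans_lt ht
  have h := Complex.norm_log_one_add_le hz1
  rw [show (1 : ℂ) + -z = 1 - z by ring] at h
  rw [norm_neg] at h
  have hzt : ‖z‖ ≤ t := hz
  have h1t : 0 < 1 - t := by linarith
  have hinv : (1 - ‖z‖)⁻¹ ≤ (1 - t)⁻¹ := by
    apply inv_anti₀ h1t; linarith
  have hsq : ‖z‖ ^ 2 ≤ ‖z‖ * t := by
    have := norm_nonneg z
    nlinarith
  calc ‖Complex.log (1 - z)‖ ≤ ‖z‖ ^ 2 * (1 - ‖z‖)⁻¹ / 2 + ‖z‖ := h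
    _ ≤ (‖z‖ * t) * (1 - t)⁻¹ / 2 + t := by
        have h0 : (0:ℝ) ≤ ‖z‖ ^ 2 := by positivity
        have := norm_nonneg z
        have hp : (0:ℝ) ≤ (1 - ‖z‖)⁻¹ := by
          apply inv_nonneg.2; linarith
        gcongr
    _ ≤ (1 * t) * (1 - t)⁻¹ / 2 + t := by
        have : ‖z‖ ≤ 1 := hz.trans ht.le
        gcongr
    _ = ((1 - t)⁻¹ / 2 + 1) * t := by ring

end aux


lemma theta_prod_tendsto {τ : ℂ} (hτ : 0 < τ.im) :
    Tendsto (fun v : ℂ => ∏' j : ℕ, ((1 - qnome τ ^ (j + 1)) *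
      (1 - Complex.exp (2 * (Real.pi : ℂ) * Complex.I * v) * qnome τ ^ (j + 1)) *
      (1 - Complex.exp (-(2 * (Real.pi : ℂ) * Complex.I * v)) * qnome τ ^ (j + 1))))
      (𝓝 0) (𝓝 (∏' j : ℕ, (1 - qnome τ ^ (j + 1)) ^ 3)) := by
  set q := qnome τ with hq
  set r : ℝ := ‖q‖ with hrdef
  have hr0 : 0 < r := qnome_norm_pos
  have hr1 : r < 1 := qnome_norm_lt_one hτ
  set s : ℝ := (1 + r) / 2 with hsdef
  have hs0 : 0 < s := by rw [hsdef]; linarith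
  have hs1 : s < 1 := by rw [hsdef]; linarith
  set A : ℝ := (1 + r) / (2 * r) with hAdef
  have hA1 : 1 < A := by
    rw [hAdef, lt_div_iff₀ (by linarith)]; linarith
  set δ : ℝ := Real.log A / (2 * Real.pi) with hδdef
  have hδ : 0 < δ := div_pos (Real.log_pos hA1) (by positivity)
  have hAexp : Real.exp (2 * Real.pi * δ) = A := by
    rw [hδdef, mul_div_cancel₀ _ (by positivity : (2 * Real.pi) ≠ 0)]
    exact Real.exp_log (by positivity)
  -- coefficient bound
  have hcexp : ∀ w : ℂ, ‖w‖ ≤ 2 * Real.pi * δ → ‖Complex.exp w‖ ≤ A := by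
    intro w hw
    rw [Complex.norm_exp, ← hAexp]
    exact Real.exp_le_exp.2 (((le_abs_self _).trans (Complex.abs_re_le_norm w)).trans hw)
  have hnv : ∀ v : ℂ, v ∈ closedBall (0:ℂ) δ → ‖2 * (Real.pi : ℂ) * Complex.I * v‖ ≤ 2 * Real.pi * δ := by
    intro v hv
    rw [mem_closedBall, dist_zero_right] at hv
    have : ‖2 * (Real.pi : ℂ) * Complex.I * v‖ = 2 * Real.pi * ‖v‖ := by
      simp [norm_mul, Complex.norm_real, Real.pi_nonneg, abs_of_nonneg]
    rw [this]
    have : (0:ℝ) ≤ 2 * Real.pi := by positivity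
    exact mul_le_mul_of_nonneg_left hv this
  -- bounds for the three z-terms
  have hz1 : ∀ j : ℕ, ‖q ^ (j + 1)‖ ≤ s ^ (j + 1) := by
    intro j
    have := coef_pow_bound hτ (w := 1) (by rw [norm_one]; exact hA1.le) j
    rwa [one_mul] at this
  have hz2 : ∀ v ∈ closedBall (0:ℂ) δ, ∀ j : ℕ,
      ‖Complex.exp (2 * (Real.pi : ℂ) * Complex.I * v) * q ^ (j + 1)‖ ≤ s ^ (j + 1) := by
    intro v hv j
    exact coef_pow_bound hτ (hcexp _ (hnv v hv)) j
  have hz3 : ∀ v ∈ closedBall (0:ℂ) δ, ∀ j : ℕ,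
      ‖Complex.exp (-(2 * (Real.pi : ℂ) * Complex.I * v)) * q ^ (j + 1)‖ ≤ s ^ (j + 1) := by
    intro v hv j
    exact coef_pow_bound hτ (hcexp _ (by rw [norm_neg]; exact hnv v hv)) j
  have hspow : ∀ j : ℕ, s ^ (j + 1) ≤ s := fun j =>
    pow_le_of_le_one hs0.le hs1.le (Nat.succ_ne_zero j)
  have hspow1 : ∀ j : ℕ, s ^ (j + 1) < 1 := fun j => (hspow j).trans_lt hs1
  set K : ℝ := (1 - s)⁻¹ / 2 + 1 with hKdef
  have hK0 : 0 < K := by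
    have : 0 < (1 - s)⁻¹ := by rw [inv_pos]; linarith
    rw [hKdef]; linarith
  -- single log bound
  have hlb : ∀ (z : ℂ) (j : ℕ), ‖z‖ ≤ s ^ (j + 1) → ‖Complex.log (1 - z)‖ ≤ K * s ^ (j + 1) := by
    intro z j hz
    have h := log_one_sub_bound (hspow1 j) (by positivity) hz
    refine h.trans ?_
    have hinv : (1 - s ^ (j + 1))⁻¹ ≤ (1 - s)⁻¹ := by
      apply inv_anti₀ (by linarith)
      have := hspow j; linarith
    have hp : (0:ℝ) ≤ s ^ (j + 1) := by positivity
    rw [hKdef]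
    gcongr
  set u : ℕ → ℝ := fun j => 3 * K * s ^ (j + 1) with hudef
  have hu : Summable u := by
    have : Summable (fun j : ℕ => (3 * K * s) * s ^ j) :=
      (summable_geometric_of_lt_one hs0.le hs1).mul_left _
    refine this.congr fun j => ?_
    show 3 * K * s * s ^ j = 3 * K * s ^ (j + 1)
    rw [pow_succ]; ring
  have hgb : ∀ (j : ℕ), ∀ v ∈ closedBall (0:ℂ) δ, ‖thetaLog τ j v‖ ≤ u j := by
    intro j v hv
    have b1 := hlb _ j (hz1 j)
    have b2 := hlb _ j (hz2 v hv j)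
    have b3 := hlb _ j (hz3 v hv j)
    calc ‖thetaLog τ j v‖ ≤ ‖Complex.log (1 - q ^ (j+1)) +
          Complex.log (1 - Complex.exp (2 * (Real.pi : ℂ) * Complex.I * v) * q ^ (j+1))‖ +
          ‖Complex.log (1 - Complex.exp (-(2 * (Real.pi : ℂ) * Complex.I * v)) * q ^ (j+1))‖ :=
        norm_add_le _ _
      _ ≤ (‖Complex.log (1 - q ^ (j+1))‖ +
          ‖Complex.log (1 - Complex.exp (2 * (Real.pi : ℂ) * Complex.I * v) * q ^ (j+1))‖) +
          ‖Complex.log (1 - Complex.exp (-(2 * (Real.pi : ℂ) * Complex.I * v)) * q ^ (j+1))‖ := by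
        gcongr; exact norm_add_le _ _
      _ ≤ K * s ^ (j+1) + K * s ^ (j+1) + K * s ^ (j+1) := by gcongr
      _ = u j := by rw [hudef]; ring
  -- slitPlane membership
  have hslit : ∀ z : ℂ, ‖z‖ < 1 → (1 - z) ∈ Complex.slitPlane := by
    intro z hz
    have := Complex.mem_slitPlane_of_norm_lt_one (z := -z) (by rwa [norm_neg])
    rwa [show (1:ℂ) + -z = 1 - z by ring] at this
  have hne : ∀ z : ℂ, ‖z‖ < 1 → (1 - z) ≠ 0 := fun z hz =>
    Complex.slitPlane_ne_zero (hslit z hz)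
  -- continuity of each term
  have hcont : ∀ j : ℕ, ContinuousOn (thetaLog τ j) (closedBall (0:ℂ) δ) := by
    intro j
    have c2 : ContinuousOn (fun v : ℂ => (1 : ℂ) -
        Complex.exp (2 * (Real.pi : ℂ) * Complex.I * v) * q ^ (j+1)) (closedBall (0:ℂ) δ) :=
      (continuous_const.sub ((Complex.continuous_exp.comp
        (continuous_const.mul continuous_id)).mul continuous_const)).continuousOn
    have c3 : ContinuousOn (fun v : ℂ => (1 : ℂ) -
        Complex.exp (-(2 * (Real.pi : ℂ) * Complex.I * v)) * q ^ (j+1)) (closedBall (0:ℂ) δ) :=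
      (continuous_const.sub ((Complex.continuous_exp.comp
        (continuous_const.mul continuous_id).neg).mul continuous_const)).continuousOn
    exact (continuousOn_const.add (c2.clog fun x hx =>
        hslit _ ((hz2 x hx j).trans_lt (hspow1 j)))).add
      (c3.clog fun x hx => hslit _ ((hz3 x hx j).trans_lt (hspow1 j)))
  have hGcont : ContinuousOn (fun v : ℂ => ∑' j : ℕ, thetaLog τ j v) (closedBall (0:ℂ) δ) :=
    continuousOn_tsum hcont hu hgb
  -- product equals exp of sum on the ball
  have hprod : ∀ v ∈ closedBall (0:ℂ) δ,
      (∏' j : ℕ, ((1 - q ^ (j + 1)) *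
        (1 - Complex.exp (2 * (Real.pi : ℂ) * Complex.I * v) * q ^ (j + 1)) *
        (1 - Complex.exp (-(2 * (Real.pi : ℂ) * Complex.I * v)) * q ^ (j + 1)))) =
      Complex.exp (∑' j : ℕ, thetaLog τ j v) := by
    intro v hv
    have hsum : Summable (fun j => thetaLog τ j v) :=
      Summable.of_norm_bounded hu (fun j => hgb j v hv)
    have h1 := hsum.hasSum.cexp
    have heq : (Complex.exp ∘ fun j => thetaLog τ j v) = fun j : ℕ =>
        ((1 - q ^ (j + 1)) *
        (1 - Complex.exp (2 * (Real.pi : ℂ) * Complex.I * v) * q ^ (j + 1)) *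
        (1 - Complex.exp (-(2 * (Real.pi : ℂ) * Complex.I * v)) * q ^ (j + 1))) := by
      funext j
      show Complex.exp (thetaLog τ j v) = _
      rw [thetaLog, Complex.exp_add, Complex.exp_add,
        Complex.exp_log (hne _ ((hz1 j).trans_lt (hspow1 j))),
        Complex.exp_log (hne _ ((hz2 v hv j).trans_lt (hspow1 j))),
        Complex.exp_log (hne _ ((hz3 v hv j).trans_lt (hspow1 j)))]
    rw [heq] at h1
    exact h1.tprod_eq
  -- now conclude
  have hmem : closedBall (0:ℂ) δ ∈ 𝓝 (0:ℂ) := closedBall_mem_nhds 0 hδ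
  have hGat : ContinuousAt (fun v : ℂ => Complex.exp (∑' j : ℕ, thetaLog τ j v)) 0 :=
    (hGcont.continuousAt hmem).cexp
  have hFeq : (fun v : ℂ => ∏' j : ℕ, ((1 - q ^ (j + 1)) *
        (1 - Complex.exp (2 * (Real.pi : ℂ) * Complex.I * v) * q ^ (j + 1)) *
        (1 - Complex.exp (-(2 * (Real.pi : ℂ) * Complex.I * v)) * q ^ (j + 1)))) =ᶠ[𝓝 (0:ℂ)]
      (fun v => Complex.exp (∑' j : ℕ, thetaLog τ j v)) :=
    eventually_of_mem hmem hprod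
  have hval : Complex.exp (∑' j : ℕ, thetaLog τ j 0) = ∏' j : ℕ, (1 - q ^ (j + 1)) ^ 3 := by
    rw [← hprod 0 (mem_closedBall_self hδ.le)]
    refine tprod_congr fun j => ?_
    simp only [mul_zero, neg_zero, Complex.exp_zero, one_mul]
    ring
  have := hGat.tendsto
  rw [hval] at this
  exact (this.congr' hFeq.symm)

/-- `θ'(0,τ) = 2π q^{1/8} ∏_{j≥1} (1-q^j)³`. -/
theorem theta_deriv_zero (τ : ℂ) (hτ : 0 < τ.im) :
    deriv (fun v => jacobiTheta0 v τ) 0 =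
      2 * (Real.pi : ℂ) * Complex.exp ((Real.pi : ℂ) * Complex.I * τ / 4) *
        ∏' j : ℕ, (1 - qnome τ ^ (j + 1)) ^ 3 := by
  set c := Complex.exp ((Real.pi : ℂ) * Complex.I * τ / 4) with hc
  set P := ∏' j : ℕ, (1 - qnome τ ^ (j + 1)) ^ 3 with hP
  set F := fun v : ℂ => ∏' j : ℕ, ((1 - qnome τ ^ (j + 1)) *
      (1 - Complex.exp (2 * (Real.pi : ℂ) * Complex.I * v) * qnome τ ^ (j + 1)) *
      (1 - Complex.exp (-(2 * (Real.pi : ℂ) * Complex.I * v)) * qnome τ ^ (j + 1))) with hF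
  have hJ : ∀ v : ℂ, jacobiTheta0 v τ = 2 * c * Complex.sin ((Real.pi : ℂ) * v) * F v :=
    fun v => rfl
  have hFt : Tendsto F (𝓝 0) (𝓝 P) := theta_prod_tendsto hτ
  have h1 : Tendsto (fun v : ℂ => Complex.sin ((Real.pi:ℂ) * v) / v) (𝓝[≠] (0:ℂ))
      (𝓝 ((Real.pi:ℂ))) := by
    have hd : HasDerivAt (fun v : ℂ => Complex.sin ((Real.pi:ℂ) * v)) ((Real.pi:ℂ)) 0 := by
      have := (Complex.hasDerivAt_sin ((Real.pi:ℂ) * 0)).comp 0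
        ((hasDerivAt_id (0:ℂ)).const_mul ((Real.pi:ℂ)))
      simpa [Function.comp_def] using this
    rw [hasDerivAt_iff_tendsto_slope] at hd
    refine hd.congr' ?_
    filter_upwards [self_mem_nhdsWithin] with v hv
    rw [slope_def_field]
    simp
  have h2 : Tendsto F (𝓝[≠] (0:ℂ)) (𝓝 P) := hFt.mono_left nhdsWithin_le_nhds
  have h3 : Tendsto (fun v : ℂ => 2 * c * (Complex.sin ((Real.pi:ℂ) * v) / v * F v))
      (𝓝[≠] (0:ℂ)) (𝓝 (2 * c * ((Real.pi:ℂ) * P))) := (h1.mul h2).const_mul _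
  have hval : 2 * c * ((Real.pi:ℂ) * P) = 2 * (Real.pi:ℂ) * c * P := by ring
  rw [hval] at h3
  have key : HasDerivAt (fun v => jacobiTheta0 v τ) (2 * (Real.pi:ℂ) * c * P) 0 := by
    rw [hasDerivAt_iff_tendsto_slope]
    refine h3.congr' ?_
    filter_upwards [self_mem_nhdsWithin] with v hv
    have hv0 : (v:ℂ) ≠ 0 := hv
    rw [slope_def_field, hJ v, hJ 0]
    simp only [mul_zero, Complex.sin_zero, sub_zero]
    field_simp
    ring
  exact key.deriv
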